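/- With P⊥ the orthogonal complement projection of projection P onto range(B), and a ∉ range(B), the residual norm after augmenting by column a satisfies ‖(I − P_{new})y‖² = ‖(I − P)y‖² − (yᵀ P⊥ a)² / ‖P⊥ a‖², where P_{new} is the projection onto range([B a]). Hence the OLS selection rule argmin over a of the new residual norm equals argmax over a of |yᵀ P⊥ a| / ‖P⊥ a‖. -/
import Mathlib


open Matrix

/-- `P` is the orthogonal projection matrix onto the subspace `U`. -/
def IsProjOnto {n : ℕ} (P : Matrix (Fin n) (Fin n) ℝ)
    (U : Submodule ℝ (Fin n → ℝ)) : Prop :=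
  P.IsSymm ∧ P * P = P ∧ LinearMap.range P.mulVecLin = U

lemma dot_mulVec_symm {n : ℕ} (P : Matrix (Fin n) (Fin n) ℝ) (h : Pᵀ = P)
    (v w : Fin n → ℝ) : P.mulVec v ⬝ᵥ w = v ⬝ᵥ P.mulVec w := by
  rw [Matrix.dotProduct_mulVec, ← Matrix.vecMul_transpose, h]

lemma dot_self_pos {n : ℕ} {v : Fin n → ℝ} (h : v ≠ 0) : 0 < v ⬝ᵥ v := by
  rcases lt_or_eq_of_le (Finset.sum_nonneg fun j _ => mul_self_nonneg (v j) :
      (0:ℝ) ≤ v ⬝ᵥ v) with h' | h'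
  · exact h'
  · exact absurd (dotProduct_self_eq_zero.mp h'.symm) h

lemma proj_mem {n : ℕ} {P : Matrix (Fin n) (Fin n) ℝ}
    {U : Submodule ℝ (Fin n → ℝ)} (hP : IsProjOnto P U) (v : Fin n → ℝ) :
    P.mulVec v ∈ U := by
  rw [← hP.2.2]; exact ⟨v, rfl⟩

lemma proj_resid_orth {n : ℕ} {P : Matrix (Fin n) (Fin n) ℝ}
    {U : Submodule ℝ (Fin n → ℝ)} (hP : IsProjOnto P U) (v : Fin n → ℝ)
    {u : Fin n → ℝ} (hu : u ∈ U) : (v - P.mulVec v) ⬝ᵥ u = 0 := by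
  obtain ⟨hs, hi, hr⟩ := hP
  rw [← hr] at hu
  obtain ⟨x, rfl⟩ := hu
  have hx : P.mulVecLin x = P.mulVec x := rfl
  rw [hx, ← dot_mulVec_symm P hs, Matrix.mulVec_sub, Matrix.mulVec_mulVec, hi,
    sub_self, zero_dotProduct]

/-- Uniqueness characterization of orthogonal projection. -/
lemma proj_apply_eq {n : ℕ} {P : Matrix (Fin n) (Fin n) ℝ}
    {U : Submodule ℝ (Fin n → ℝ)} (hP : IsProjOnto P U) (y q : Fin n → ℝ)
    (hq : q ∈ U) (horth : ∀ u ∈ U, (y - q) ⬝ᵥ u = 0) : P.mulVec y = q := by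
  set d := P.mulVec y - q with hd
  have hdU : d ∈ U := U.sub_mem (proj_mem hP y) hq
  have h1 : (y - P.mulVec y) ⬝ᵥ d = 0 := proj_resid_orth hP y hdU
  have h2 : (y - q) ⬝ᵥ d = 0 := horth d hdU
  have h3 : d ⬝ᵥ d = 0 := by
    have he : d = (y - q) - (y - P.mulVec y) := by rw [hd]; abel
    nth_rewrite 1 [he]
    rw [sub_dotProduct, h1, h2, sub_zero]
  have h4 := dotProduct_self_eq_zero.mp h3
  rw [hd, sub_eq_zero] at h4
  exact h4

lemma one_sub_mulVec {n : ℕ} (Q : Matrix (Fin n) (Fin n) ℝ) (v : Fin n → ℝ) :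
    (1 - Q).mulVec v = v - Q.mulVec v := by
  rw [Matrix.sub_mulVec, Matrix.one_mulVec]

/-- The core residual-norm update identity, stated abstractly. -/
lemma residual_aux {n : ℕ} {P Pnew : Matrix (Fin n) (Fin n) ℝ}
    {U W : Submodule ℝ (Fin n → ℝ)} (hP : IsProjOnto P U)
    (hPnew : IsProjOnto Pnew W) (y a : Fin n → ℝ) (ha : a ∉ U)
    (hUW : U ≤ W) (haW : a ∈ W)
    (hWle : ∀ u ∈ W, ∃ (z : Fin n → ℝ) (t : ℝ), z ∈ U ∧ u = z + t • a) :
    (1 - Pnew).mulVec y ⬝ᵥ (1 - Pnew).mulVec y =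
      (1 - P).mulVec y ⬝ᵥ (1 - P).mulVec y -
        (y ⬝ᵥ (1 - P).mulVec a) ^ 2 /
          ((1 - P).mulVec a ⬝ᵥ (1 - P).mulVec a) := by
  set w : Fin n → ℝ := a - P.mulVec a with hw
  set r : Fin n → ℝ := y - P.mulVec y with hr
  have hPsymm : Pᵀ = P := hP.1
  have hwe : (1 - P).mulVec a = w := one_sub_mulVec P a
  have hre : (1 - P).mulVec y = r := one_sub_mulVec P y
  have hwne : w ≠ 0 := by
    intro h
    apply ha
    rw [hw, sub_eq_zero] at h
    rw [h]
    exact proj_mem hP a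
  have hs_pos : 0 < w ⬝ᵥ w := dot_self_pos hwne
  have hs_ne : w ⬝ᵥ w ≠ 0 := ne_of_gt hs_pos
  set c : ℝ := (y ⬝ᵥ w) / (w ⬝ᵥ w) with hc
  have hPaU : P.mulVec a ∈ U := proj_mem hP a
  have hrU : ∀ u ∈ U, r ⬝ᵥ u = 0 := fun u hu => proj_resid_orth hP y hu
  have hwU : ∀ u ∈ U, w ⬝ᵥ u = 0 := fun u hu => proj_resid_orth hP a hu
  have hPw : P.mulVec w = 0 := by
    rw [hw, Matrix.mulVec_sub, Matrix.mulVec_mulVec, hP.2.1, sub_self]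
  have hrw : r ⬝ᵥ w = y ⬝ᵥ w := by
    rw [hr, sub_dotProduct, dot_mulVec_symm P hPsymm, hPw,
      dotProduct_zero, sub_zero]
  have haeq : a = w + P.mulVec a := by rw [hw]; abel
  have hra : r ⬝ᵥ a = y ⬝ᵥ w := by
    nth_rewrite 1 [haeq]
    rw [dotProduct_add, hrU _ hPaU, add_zero, hrw]
  have hwa : w ⬝ᵥ a = w ⬝ᵥ w := by
    nth_rewrite 1 [haeq]
    rw [dotProduct_add, hwU _ hPaU, add_zero]
  have hyq : y - (P.mulVec y + c • w) = r - c • w := by rw [hr]; abel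
  have h2 : (r - c • w) ⬝ᵥ a = 0 := by
    rw [sub_dotProduct, smul_dotProduct, hra, hwa,
      smul_eq_mul, hc, div_mul_cancel₀ _ hs_ne, sub_self]
  -- the projection of y onto W
  have hq : Pnew.mulVec y = P.mulVec y + c • w := by
    apply proj_apply_eq hPnew
    · exact W.add_mem (hUW (proj_mem hP y)) (W.smul_mem c
        (W.sub_mem haW (hUW hPaU)))
    · intro u hu
      obtain ⟨z, t, hz, rfl⟩ := hWle u hu
      have h1 : (r - c • w) ⬝ᵥ z = 0 := by
        rw [sub_dotProduct, hrU _ hz, smul_dotProduct,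
          hwU _ hz, smul_zero, sub_zero]
      rw [hyq, dotProduct_add, h1, dotProduct_smul, h2,
        smul_zero, add_zero]
  rw [one_sub_mulVec Pnew y, hq, hre, hwe, hyq]
  have expand : (r - c • w) ⬝ᵥ (r - c • w) =
      r ⬝ᵥ r - 2 * c * (r ⬝ᵥ w) + c * c * (w ⬝ᵥ w) := by
    simp only [sub_dotProduct, dotProduct_sub,
      smul_dotProduct, dotProduct_smul, smul_eq_mul,
      dotProduct_comm w r]
    ring
  rw [expand, hrw, hc]
  field_simp
  ring


lemma hMstruct_aux {n i : ℕ} (B : Matrix (Fin n) (Fin i) ℝ) (a : Fin n → ℝ)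
    (v : Fin (i+1) → ℝ) :
    (Matrix.of fun r (c : Fin (i + 1)) =>
      Fin.lastCases (a r) (fun j => B r j) c).mulVec v =
    B.mulVec (fun j => v j.castSucc) + v (Fin.last i) • a := by
  funext r
  simp only [Matrix.mulVec, dotProduct, Fin.sum_univ_castSucc,
    Matrix.of_apply, Fin.lastCases_castSucc, Fin.lastCases_last,
    Pi.add_apply, Pi.smul_apply, smul_eq_mul]
  ring

lemma main_aux {n i : ℕ} (B : Matrix (Fin n) (Fin i) ℝ) (y : Fin n → ℝ)
    (P : Matrix (Fin n) (Fin n) ℝ)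
    (hP : IsProjOnto P (LinearMap.range B.mulVecLin))
    (a : Fin n → ℝ) (ha : a ∉ LinearMap.range B.mulVecLin)
    (Pnew : Matrix (Fin n) (Fin n) ℝ)
    (hPnew : IsProjOnto Pnew (LinearMap.range (Matrix.of fun r (c : Fin (i + 1)) =>
      Fin.lastCases (a r) (fun j => B r j) c).mulVecLin)) :
    (1 - Pnew).mulVec y ⬝ᵥ (1 - Pnew).mulVec y =
      (1 - P).mulVec y ⬝ᵥ (1 - P).mulVec y -
        (y ⬝ᵥ (1 - P).mulVec a) ^ 2 /
          ((1 - P).mulVec a ⬝ᵥ (1 - P).mulVec a) := by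
  refine residual_aux hP hPnew y a ha ?_ ?_ ?_
  · rintro u ⟨x, rfl⟩
    refine ⟨Fin.snoc x 0, ?_⟩
    rw [Matrix.mulVecLin_apply, Matrix.mulVecLin_apply, hMstruct_aux B a]
    simp [Fin.snoc_last, Fin.snoc_castSucc]
  · refine ⟨Fin.snoc 0 1, ?_⟩
    rw [Matrix.mulVecLin_apply, hMstruct_aux B a]
    simp [Fin.snoc_last, Fin.snoc_castSucc,
      show (fun _ : Fin i => (0:ℝ)) = 0 from rfl]
  · rintro u ⟨v, rfl⟩
    exact ⟨B.mulVec (fun j => v j.castSucc), v (Fin.last i), ⟨_, rfl⟩,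
      by rw [Matrix.mulVecLin_apply, hMstruct_aux B a]⟩

lemma hspos_aux {n i : ℕ} (B : Matrix (Fin n) (Fin i) ℝ)
    (P : Matrix (Fin n) (Fin n) ℝ)
    (hP : IsProjOnto P (LinearMap.range B.mulVecLin))
    (a : Fin n → ℝ) (ha : a ∉ LinearMap.range B.mulVecLin) :
    0 < (1 - P).mulVec a ⬝ᵥ (1 - P).mulVec a := by
  refine dot_self_pos fun h => ha ?_
  rw [one_sub_mulVec P a, sub_eq_zero] at h
  rw [h]
  exact proj_mem hP a

lemma ratio_sqrt_aux {n : ℕ} (P : Matrix (Fin n) (Fin n) ℝ)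
    (y a : Fin n → ℝ) :
    |y ⬝ᵥ (1 - P).mulVec a| /
      Real.sqrt ((1 - P).mulVec a ⬝ᵥ (1 - P).mulVec a) =
    Real.sqrt ((y ⬝ᵥ (1 - P).mulVec a) ^ 2 /
      ((1 - P).mulVec a ⬝ᵥ (1 - P).mulVec a)) := by
  rw [Real.sqrt_div (sq_nonneg _), Real.sqrt_sq_eq_abs]

/-- residual norm update after augmenting by a column, and the
equivalence of the OLS residual-minimization rule with maximizing
`|yᵀP⊥a| / ‖P⊥a‖`. -/
theorem residual_update_and_selection {n i : ℕ} (B : Matrix (Fin n) (Fin i) ℝ)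
    (hB : LinearIndependent ℝ Bᵀ) (y : Fin n → ℝ)
    (P : Matrix (Fin n) (Fin n) ℝ)
    (hP : IsProjOnto P (LinearMap.range B.mulVecLin)) :
    (∀ (a : Fin n → ℝ), a ∉ LinearMap.range B.mulVecLin →
      ∀ Pnew : Matrix (Fin n) (Fin n) ℝ,
        IsProjOnto Pnew (LinearMap.range (Matrix.of fun r (c : Fin (i + 1)) =>
          Fin.lastCases (a r) (fun j => B r j) c).mulVecLin) →
        (1 - Pnew).mulVec y ⬝ᵥ (1 - Pnew).mulVec y =
          (1 - P).mulVec y ⬝ᵥ (1 - P).mulVec y -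
            (y ⬝ᵥ (1 - P).mulVec a) ^ 2 /
              ((1 - P).mulVec a ⬝ᵥ (1 - P).mulVec a)) ∧
    (∀ (a₁ a₂ : Fin n → ℝ), a₁ ∉ LinearMap.range B.mulVecLin →
      a₂ ∉ LinearMap.range B.mulVecLin →
      ∀ P₁ P₂ : Matrix (Fin n) (Fin n) ℝ,
        IsProjOnto P₁ (LinearMap.range (Matrix.of fun r (c : Fin (i + 1)) =>
          Fin.lastCases (a₁ r) (fun j => B r j) c).mulVecLin) →
        IsProjOnto P₂ (LinearMap.range (Matrix.of fun r (c : Fin (i + 1)) =>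
          Fin.lastCases (a₂ r) (fun j => B r j) c).mulVecLin) →
        ((1 - P₁).mulVec y ⬝ᵥ (1 - P₁).mulVec y ≤
            (1 - P₂).mulVec y ⬝ᵥ (1 - P₂).mulVec y ↔
          |y ⬝ᵥ (1 - P).mulVec a₂| /
              Real.sqrt ((1 - P).mulVec a₂ ⬝ᵥ (1 - P).mulVec a₂) ≤
            |y ⬝ᵥ (1 - P).mulVec a₁| /
              Real.sqrt ((1 - P).mulVec a₁ ⬝ᵥ (1 - P).mulVec a₁))) := by
  refine ⟨fun a ha Pnew hPnew => main_aux B y P hP a ha Pnew hPnew, ?_⟩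
  intro a₁ a₂ ha₁ ha₂ P₁ P₂ hP₁ hP₂
  rw [main_aux B y P hP a₁ ha₁ P₁ hP₁, main_aux B y P hP a₂ ha₂ P₂ hP₂,
    ratio_sqrt_aux P y a₁, ratio_sqrt_aux P y a₂, sub_le_sub_iff_left]
  constructor
  · intro h; exact Real.sqrt_le_sqrt h
  · intro h
    exact (Real.sqrt_le_sqrt_iff
      (div_nonneg (sq_nonneg _) (hspos_aux B P hP a₁ ha₁).le)).mp h
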